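/- arXiv:2506.09515 — 8 statements merged into one kernel-verified Lean document; each statement's English description precedes it below -/
import Mathlib

section
/- Let r ≥ 2 and 0 ≤ d < r be integers with d+1 ≤ r/2, and let Δ be a positive integer. Then there exists an r-partite graph G with parts of size Δ and maximum degree at most Δ whose largest independent partial transversal has size at most r − (d+1). (Hence n(r, d+1, Δ) ≥ Δ.) -/
/-- For r ≥ 2, 0 ≤ d < r with d+1 ≤ r/2 and Δ ≥ 1 there is an r-partite graph with
parts of size Δ, maximum degree at most Δ, whose largest independent partial
transversal has size at most r − (d+1). -/
theorem stmt2 (r d Δ : ℕ) (hr : 2 ≤ r) (hd : d < r) (hd2 : 2 * (d + 1) ≤ r) (hΔ : 0 < Δ) :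
    ∃ (V : Type) (_ : Fintype V) (G : SimpleGraph V) (part : V → Fin r),
      (∀ i : Fin r, ({v | part v = i} : Set V).ncard = Δ) ∧
      (∀ v w, G.Adj v w → part v ≠ part w) ∧
      (∀ v, (G.neighborSet v).ncard ≤ Δ) ∧
      (∀ S : Finset V, (∀ x ∈ S, ∀ y ∈ S, ¬ G.Adj x y) → Set.InjOn part ↑S →
        S.card ≤ r - (d + 1)) := by
  refine ⟨Fin r × Fin Δ, inferInstance,
    { Adj := fun v w => v.1 ≠ w.1 ∧ v.1.val / 2 = w.1.val / 2
      symm := by constructor; intro v w h; exact ⟨h.1.symm, h.2.symm⟩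
      loopless := by constructor; intro v h; exact h.1 rfl }, Prod.fst, ?_, ?_, ?_, ?_⟩
  · intro i
    have h1 : ({v : Fin r × Fin Δ | v.1 = i} : Set (Fin r × Fin Δ)) =
        (fun a : Fin Δ => (i, a)) '' Set.univ := by
      ext ⟨j, a⟩
      simp [eq_comm]
    rw [h1, Set.ncard_image_of_injective _ (fun a b h => (Prod.mk.injEq _ _ _ _ ▸ h).2),
      Set.ncard_univ, Nat.card_eq_fintype_card, Fintype.card_fin]
  · intro v w h
    exact h.1
  · intro v
    have : (Set.univ : Set (Fin Δ)).ncard = Δ := by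
      rw [Set.ncard_univ, Nat.card_eq_fintype_card, Fintype.card_fin]
    refine le_of_le_of_eq (Set.ncard_le_ncard_of_injOn (fun w => w.2) ?_ ?_ Set.finite_univ) this
    · intro w _; trivial
    · intro w hw w' hw' hww'
      simp only [SimpleGraph.mem_neighborSet] at hw hw'
      have h1 : w.1 = w'.1 := by
        have e1 : w.1.val ≠ v.1.val := fun h => hw.1 (Fin.ext h.symm)
        have e2 : w'.1.val ≠ v.1.val := fun h => hw'.1 (Fin.ext h.symm)
        have e3 := hw.2
        have e4 := hw'.2
        exact Fin.ext (by omega)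
      exact Prod.ext h1 hww'
  · intro S hind hinj
    have key : S.card ≤ (r + 1) / 2 := by
      have := Finset.card_le_card_of_injOn (s := S) (f := fun v : Fin r × Fin Δ => v.1.val / 2)
        (t := Finset.range ((r + 1) / 2)) ?_ ?_
      · simpa using this
      · intro v hv
        simp only [Finset.coe_range, Set.mem_Iio, Finset.mem_range]
        have := v.1.isLt
        omega
      · intro v hv w hw hvw
        by_cases h : v.1 = w.1
        · exact hinj hv hw h
        · exact absurd ⟨h, hvw⟩ (hind v hv w hw)
    omega
end

section
/- The disjoint union of ⌊r/2⌋ copies of K_{Δ,Δ}, with the two sides of each copy placed in two distinct parts (and, if r is odd, one additional part consisting of Δ isolated vertices), is an r-partite graph with maximum degree Δ whose maximum independent transversal (independent set with at most one vertex per part) has size exactly ⌈r/2⌉. -/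
/-- The disjoint union of ⌊r/2⌋ copies of K_{Δ,Δ} (classes 2k, 2k+1 paired, plus an
isolated class if r is odd) is an r-partite graph with maximum degree Δ whose maximum
independent partial transversal has size exactly ⌈r/2⌉ = (r+1)/2. -/
theorem stmt3 (r Δ : ℕ) (hr : 2 ≤ r) (hΔ : 0 < Δ) :
    let G : SimpleGraph (Fin r × Fin Δ) :=
      SimpleGraph.fromRel (fun x y => x.1 ≠ y.1 ∧ (x.1 : ℕ) / 2 = (y.1 : ℕ) / 2)
    (∀ v w, G.Adj v w → v.1 ≠ w.1) ∧
    (∀ v, (G.neighborSet v).ncard ≤ Δ) ∧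
    (∃ v, (G.neighborSet v).ncard = Δ) ∧
    (∀ S : Finset (Fin r × Fin Δ), (∀ x ∈ S, ∀ y ∈ S, ¬ G.Adj x y) →
      Set.InjOn (Prod.fst : Fin r × Fin Δ → Fin r) ↑S → S.card ≤ (r + 1) / 2) ∧
    (∃ S : Finset (Fin r × Fin Δ), (∀ x ∈ S, ∀ y ∈ S, ¬ G.Adj x y) ∧
      Set.InjOn (Prod.fst : Fin r × Fin Δ → Fin r) ↑S ∧ S.card = (r + 1) / 2) := by
  intro G
  have hAdj : ∀ v w : Fin r × Fin Δ, G.Adj v w ↔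
      v ≠ w ∧ v.1 ≠ w.1 ∧ (v.1 : ℕ) / 2 = (w.1 : ℕ) / 2 := by
    intro v w
    show SimpleGraph.Adj (SimpleGraph.fromRel _) v w ↔ _
    rw [SimpleGraph.fromRel_adj]
    constructor
    · rintro ⟨h, ⟨h1, h2⟩ | ⟨h1, h2⟩⟩
      · exact ⟨h, h1, h2⟩
      · exact ⟨h, h1.symm, h2.symm⟩
    · rintro ⟨h, h1, h2⟩; exact ⟨h, Or.inl ⟨h1, h2⟩⟩
  refine ⟨fun v w h => ((hAdj v w).1 h).2.1, ?_, ?_, ?_, ?_⟩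
  · -- max degree ≤ Δ
    intro v
    have hinj : Set.InjOn Prod.snd (G.neighborSet v) := by
      intro w hw w' hw' hsnd
      rw [SimpleGraph.mem_neighborSet, hAdj] at hw hw'
      have h1 : (v.1 : ℕ) ≠ (w.1 : ℕ) := fun h => hw.2.1 (Fin.val_injective h)
      have h1' : (v.1 : ℕ) ≠ (w'.1 : ℕ) := fun h => hw'.2.1 (Fin.val_injective h)
      have h2 := hw.2.2
      have h2' := hw'.2.2
      have : (w.1 : ℕ) = (w'.1 : ℕ) := by omega
      exact Prod.ext (Fin.val_injective this) hsnd
    calc (G.neighborSet v).ncard ≤ (Set.univ : Set (Fin Δ)).ncard :=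
          Set.ncard_le_ncard_of_injOn Prod.snd (fun _ _ => trivial) hinj Set.finite_univ
      _ = Δ := by simp [Set.ncard_univ]
  · -- a vertex of degree Δ
    refine ⟨(⟨0, by omega⟩, ⟨0, hΔ⟩), ?_⟩
    have hset : G.neighborSet (⟨0, by omega⟩, ⟨0, hΔ⟩)
        = (fun b : Fin Δ => ((⟨1, by omega⟩ : Fin r), b)) '' Set.univ := by
      ext w
      rw [SimpleGraph.mem_neighborSet, hAdj]
      constructor
      · rintro ⟨hne, h1, h2⟩
        refine ⟨w.2, trivial, ?_⟩
        have h1' : (0 : ℕ) ≠ (w.1 : ℕ) := fun h => h1 (Fin.val_injective h)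
        have : (w.1 : ℕ) = 1 := by simp at h2; omega
        exact Prod.ext (Fin.val_injective this.symm) rfl
      · rintro ⟨b, -, rfl⟩
        refine ⟨?_, ?_, ?_⟩
        · intro h; exact absurd (congrArg (fun p => (p.1 : ℕ)) h) (by simp)
        · intro h; exact absurd (congrArg (fun i : Fin r => (i : ℕ)) h) (by simp)
        · simp
    rw [hset, Set.ncard_image_of_injective _ (fun a b h => (Prod.mk.injEq _ _ _ _ ▸ h).2)]
    simp [Set.ncard_univ]
  · -- upper bound
    intro S hind hinj
    have key : ∀ v : Fin r × Fin Δ, (v.1 : ℕ) / 2 < (r + 1) / 2 := by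
      intro v; have := v.1.isLt; omega
    have hinj2 : Set.InjOn
        (fun v : Fin r × Fin Δ => (⟨(v.1 : ℕ) / 2, key v⟩ : Fin ((r + 1) / 2))) ↑S := by
      intro x hx y hy hxy
      have hxy' : (x.1 : ℕ) / 2 = (y.1 : ℕ) / 2 := congrArg Fin.val hxy
      by_cases h : x.1 = y.1
      · exact hinj hx hy h
      · exact absurd ((hAdj x y).2 ⟨fun he => h (congrArg Prod.fst he), h, hxy'⟩)
          (hind x hx y hy)
    have h := Finset.card_le_card_of_injOn _ (fun v _ => Finset.mem_univ _) hinj2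
    simpa using h
  · -- lower bound construction
    refine ⟨Finset.image
        (fun k : Fin ((r + 1) / 2) =>
          ((⟨2 * (k : ℕ), by have := k.isLt; omega⟩ : Fin r), (⟨0, hΔ⟩ : Fin Δ)))
        Finset.univ, ?_, ?_, ?_⟩
    · intro x hx y hy hadj
      simp only [Finset.mem_image, Finset.mem_univ, true_and] at hx hy
      obtain ⟨k, rfl⟩ := hx
      obtain ⟨k', rfl⟩ := hy
      obtain ⟨-, h1, h2⟩ := (hAdj _ _).1 hadj
      have hk : (k : ℕ) = (k' : ℕ) := by simp at h2; omega
      exact h1 (Fin.val_injective (by simp [hk]))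
    · intro x hx y hy hxy
      simp only [Finset.coe_image, Finset.coe_univ, Set.image_univ, Set.mem_range] at hx hy
      obtain ⟨k, rfl⟩ := hx
      obtain ⟨k', rfl⟩ := hy
      have : (k : ℕ) = (k' : ℕ) := by
        have := congrArg Fin.val hxy; simp at this; omega
      simp [Fin.val_injective this]
    · rw [Finset.card_image_of_injective _ ?_, Finset.card_univ, Fintype.card_fin]
      intro a b h
      have := congrArg (fun p : Fin r × Fin Δ => (p.1 : ℕ)) h
      simp at this
      exact Fin.val_injective (by omega)
end

section
/- With the setup of the previous counting (I of size at most 2(t−d−1) dominating t classes of size n each, max degree Δ): for any subset Y ⊆ I, the set of vertices in the t classes whose unique neighbor in I lies in Y has size at least (|Y| + 4d + 4 − 4t)Δ + 2tn. -/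
/-- With I of size ≤ 2(t−d−1) dominating t disjoint classes of size at least n in a
graph of maximum degree ≤ Δ, for every Y ⊆ I the set of vertices of the classes whose
unique neighbour in I lies in Y has size ≥ (|Y| + 4d + 4 − 4t)Δ + 2tn. -/
theorem stmt5 {V : Type} [Fintype V] (t d n Δ : ℕ)
    (G : SimpleGraph V) (hΔ : ∀ v, (G.neighborSet v).ncard ≤ Δ)
    (classes : Fin t → Finset V)
    (hdisj : ∀ i j, i ≠ j → Disjoint (classes i) (classes j))
    (hsize : ∀ i, n ≤ (classes i).card)
    (I : Finset V)
    (hI : (I.card : ℤ) ≤ 2 * ((t : ℤ) - d - 1))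
    (hdom : ∀ i, ∀ x ∈ classes i, ∃ y ∈ I, G.Adj x y)
    (Y : Finset V) (hY : Y ⊆ I) :
    ((Y.card : ℤ) + 4 * d + 4 - 4 * t) * Δ + 2 * t * n ≤
      ((({x | (∃ i, x ∈ classes i) ∧ ∃ v ∈ Y, G.neighborSet x ∩ ↑I = {v}} : Set V).ncard : ℤ)) := by
  classical
  set U : Finset V := Finset.univ.biUnion classes with hU
  have hmemU : ∀ x, x ∈ U ↔ ∃ i, x ∈ classes i := by
    intro x; simp [hU]
  set f : V → ℕ := fun x => (I.filter (fun v => G.Adj x v)).card with hf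
  have hfset : ∀ x, (G.neighborSet x ∩ ↑I) = ↑(I.filter (fun v => G.Adj x v)) := by
    intro x; ext v
    simp [SimpleGraph.mem_neighborSet, and_comm]
  set A := U.filter (fun x => ∃ v ∈ Y, G.neighborSet x ∩ ↑I = {v}) with hA
  set B := U.filter (fun x => ∃ v ∈ I \ Y, G.neighborSet x ∩ ↑I = {v}) with hB
  set C := U.filter (fun x => 2 ≤ f x) with hC
  -- the target set is A
  have htarget : {x : V | (∃ i, x ∈ classes i) ∧ ∃ v ∈ Y, G.neighborSet x ∩ ↑I = {v}}
      = (↑A : Set V) := by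
    ext x
    simp only [Set.mem_setOf_eq, hA, Finset.coe_filter, hmemU]
  -- degree bound as a finset statement
  have hdeg : ∀ (v : V) (s : Finset V), (∀ x ∈ s, G.Adj x v) → s.card ≤ Δ := by
    intro v s hs
    have hsub : (↑s : Set V) ⊆ G.neighborSet v := by
      intro x hx
      exact (hs x hx).symm
    calc s.card = (↑s : Set V).ncard := (Set.ncard_coe_finset s).symm
      _ ≤ (G.neighborSet v).ncard := Set.ncard_le_ncard hsub (Set.toFinite _)
      _ ≤ Δ := hΔ v
  -- total edge count
  have hsum_le : ∑ x ∈ U, f x ≤ I.card * Δ := by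
    have h1 : ∀ x, f x = ∑ v ∈ I, if G.Adj x v then 1 else 0 := by
      intro x; exact Finset.card_filter _ _
    calc ∑ x ∈ U, f x = ∑ x ∈ U, ∑ v ∈ I, if G.Adj x v then 1 else 0 := by
            exact Finset.sum_congr rfl (fun x _ => h1 x)
      _ = ∑ v ∈ I, ∑ x ∈ U, if G.Adj x v then 1 else 0 := Finset.sum_comm
      _ = ∑ v ∈ I, (U.filter (fun x => G.Adj x v)).card := by
            exact Finset.sum_congr rfl (fun v _ => (Finset.card_filter _ _).symm)
      _ ≤ ∑ v ∈ I, Δ := Finset.sum_le_sum (fun v _ =>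
            hdeg v _ (fun x hx => (Finset.mem_filter.mp hx).2))
      _ = I.card * Δ := by rw [Finset.sum_const, smul_eq_mul]
  -- every vertex of U has a neighbour in I
  have hone : ∀ x ∈ U, 1 ≤ f x := by
    intro x hx
    obtain ⟨i, hi⟩ := (hmemU x).mp hx
    obtain ⟨y, hyI, hadj⟩ := hdom i x hi
    have : y ∈ I.filter (fun v => G.Adj x v) := Finset.mem_filter.mpr ⟨hyI, hadj⟩
    exact Finset.card_pos.mpr ⟨y, this⟩
  -- covering
  have hcover : U ⊆ A ∪ B ∪ C := by
    intro x hx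
    by_cases h2 : 2 ≤ f x
    · exact Finset.mem_union_right _ (Finset.mem_filter.mpr ⟨hx, h2⟩)
    · have h1 : f x = 1 := le_antisymm (by omega) (hone x hx)
      obtain ⟨v, hv⟩ := Finset.card_eq_one.mp h1
      have hvI : v ∈ I := by
        have : v ∈ I.filter (fun v => G.Adj x v) := by rw [hv]; exact Finset.mem_singleton_self v
        exact (Finset.mem_filter.mp this).1
      have hset : G.neighborSet x ∩ ↑I = {v} := by
        rw [hfset x, hv]; simp
      by_cases hvY : v ∈ Y
      · exact Finset.mem_union_left _ (Finset.mem_union_left _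
          (Finset.mem_filter.mpr ⟨hx, v, hvY, hset⟩))
      · exact Finset.mem_union_left _ (Finset.mem_union_right _
          (Finset.mem_filter.mpr ⟨hx, v, Finset.mem_sdiff.mpr ⟨hvI, hvY⟩, hset⟩))
  -- B is small
  have hBle : (B.card : ℤ) ≤ ((I.card : ℤ) - Y.card) * Δ := by
    have hsub : B ⊆ (I \ Y).biUnion (fun v => U.filter (fun x => G.Adj x v)) := by
      intro x hx
      obtain ⟨hxU, v, hvIY, hset⟩ := Finset.mem_filter.mp hx
      have hadj : G.Adj x v := by
        have : v ∈ G.neighborSet x ∩ ↑I := by rw [hset]; rfl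
        exact this.1
      exact Finset.mem_biUnion.mpr ⟨v, hvIY, Finset.mem_filter.mpr ⟨hxU, hadj⟩⟩
    have h1 : B.card ≤ (I \ Y).card * Δ := by
      calc B.card ≤ ((I \ Y).biUnion (fun v => U.filter (fun x => G.Adj x v))).card :=
            Finset.card_le_card hsub
        _ ≤ ∑ v ∈ I \ Y, (U.filter (fun x => G.Adj x v)).card := Finset.card_biUnion_le
        _ ≤ ∑ v ∈ I \ Y, Δ := Finset.sum_le_sum (fun v _ =>
            hdeg v _ (fun x hx => (Finset.mem_filter.mp hx).2))
        _ = (I \ Y).card * Δ := by rw [Finset.sum_const, smul_eq_mul]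
    have h2 : (I \ Y).card = I.card - Y.card := Finset.card_sdiff_of_subset hY
    have h3 : Y.card ≤ I.card := Finset.card_le_card hY
    have h4 : (B.card : ℤ) ≤ ((I.card - Y.card : ℕ) : ℤ) * Δ := by
      exact_mod_cast h2 ▸ h1
    rwa [Nat.cast_sub h3] at h4
  -- disjointness
  have hdAB : Disjoint A B := by
    rw [Finset.disjoint_left]
    intro x hxA hxB
    obtain ⟨_, v, hvY, hv⟩ := Finset.mem_filter.mp hxA
    obtain ⟨_, w, hwIY, hw⟩ := Finset.mem_filter.mp hxB
    have : v = w := by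
      have := hv.symm.trans hw
      exact Set.singleton_eq_singleton_iff.mp this
    exact (Finset.mem_sdiff.mp hwIY).2 (this ▸ hvY)
  have hfone : ∀ x, (∃ v ∈ I, G.neighborSet x ∩ ↑I = {v}) → f x = 1 := by
    intro x ⟨v, hvI, hv⟩
    have : (↑(I.filter (fun v => G.Adj x v)) : Set V) = {v} := by rw [← hfset x]; exact hv
    have h2 : I.filter (fun v => G.Adj x v) = {v} := by
      apply Finset.coe_injective; rw [this]; simp
    simp [hf, h2]
  have hdAC : Disjoint A C := by
    rw [Finset.disjoint_left]
    intro x hxA hxC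
    obtain ⟨_, v, hvY, hv⟩ := Finset.mem_filter.mp hxA
    have h1 : f x = 1 := hfone x ⟨v, hY hvY, hv⟩
    have h2 := (Finset.mem_filter.mp hxC).2
    omega
  have hdBC : Disjoint B C := by
    rw [Finset.disjoint_left]
    intro x hxB hxC
    obtain ⟨_, v, hvIY, hv⟩ := Finset.mem_filter.mp hxB
    have h1 : f x = 1 := hfone x ⟨v, (Finset.mem_sdiff.mp hvIY).1, hv⟩
    have h2 := (Finset.mem_filter.mp hxC).2
    omega
  -- card of U
  have hUcard : t * n ≤ U.card := by
    rw [hU, Finset.card_biUnion (fun i _ j _ hij => hdisj i j hij)]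
    calc t * n = ∑ _i : Fin t, n := by simp [Finset.sum_const, mul_comm]
      _ ≤ ∑ i : Fin t, (classes i).card := Finset.sum_le_sum (fun i _ => hsize i)
  -- |U| ≤ |A| + |B| + |C|
  have hUle : U.card ≤ A.card + B.card + C.card := by
    calc U.card ≤ (A ∪ B ∪ C).card := Finset.card_le_card hcover
      _ ≤ (A ∪ B).card + C.card := Finset.card_union_le _ _
      _ ≤ A.card + B.card + C.card := by
          have := Finset.card_union_le A B
          omega
  -- lower bound on the edge sum
  have hsum_ge : A.card + B.card + 2 * C.card ≤ ∑ x ∈ U, f x := by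
    have hsubU : A ∪ B ∪ C ⊆ U := by
      apply Finset.union_subset (Finset.union_subset _ _) <;>
        first | exact Finset.filter_subset _ _
    have h1 : ∑ x ∈ A ∪ B ∪ C, f x ≤ ∑ x ∈ U, f x :=
      Finset.sum_le_sum_of_subset hsubU
    have h2 : ∑ x ∈ A ∪ B ∪ C, f x = ∑ x ∈ A, f x + ∑ x ∈ B, f x + ∑ x ∈ C, f x := by
      rw [Finset.sum_union (by
        rw [Finset.disjoint_union_left]; exact ⟨hdAC, hdBC⟩),
        Finset.sum_union hdAB]
    have hAge : A.card ≤ ∑ x ∈ A, f x := by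
      calc A.card = ∑ _x ∈ A, 1 := by simp
        _ ≤ ∑ x ∈ A, f x := Finset.sum_le_sum (fun x hx =>
            hone x (Finset.filter_subset _ _ hx))
    have hBge : B.card ≤ ∑ x ∈ B, f x := by
      calc B.card = ∑ _x ∈ B, 1 := by simp
        _ ≤ ∑ x ∈ B, f x := Finset.sum_le_sum (fun x hx =>
            hone x (Finset.filter_subset _ _ hx))
    have hCge : 2 * C.card ≤ ∑ x ∈ C, f x := by
      calc 2 * C.card = ∑ _x ∈ C, 2 := by simp [mul_comm]
        _ ≤ ∑ x ∈ C, f x := Finset.sum_le_sum (fun x hx =>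
            (Finset.mem_filter.mp hx).2)
    omega
  -- wrap up over ℤ
  rw [htarget, Set.ncard_coe_finset]
  have hYI : (Y.card : ℤ) ≤ I.card := by exact_mod_cast Finset.card_le_card hY
  have hmul : (I.card : ℤ) * Δ ≤ 2 * ((t : ℤ) - d - 1) * Δ :=
    mul_le_mul_of_nonneg_right hI (by positivity)
  have hs1 : (∑ x ∈ U, f x : ℤ) ≤ (I.card : ℤ) * Δ := by exact_mod_cast hsum_le
  have hs2 : (A.card : ℤ) + B.card + 2 * C.card ≤ (∑ x ∈ U, f x : ℤ) := by
    exact_mod_cast hsum_ge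
  have hs3 : (U.card : ℤ) ≤ (A.card : ℤ) + B.card + C.card := by exact_mod_cast hUle
  have hs4 : (t : ℤ) * n ≤ U.card := by exact_mod_cast hUcard
  nlinarith [hBle, hmul, hs1, hs2, hs3, hs4]
end

section
/- With the same setup (I of size at most 2(t−d−1) dominating the union V' of t ≤ r disjoint classes of size n each, maximum degree ≤ Δ): if n > 2Δ(1 − (4d+5)/(4r)), then for every subset Y ⊆ I, |⋃_{v∈Y} A_v| > (|Y| − 1)Δ. -/
set_option maxHeartbeats 1000000 in
/-- With the same setup, t ≤ r and n > 2Δ(1 − (4d+5)/(4r)): for every Y ⊆ I,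
|⋃_{v∈Y} A_v| > (|Y| − 1)Δ. -/
theorem stmt6 {V : Type} [Fintype V] (r t d n Δ : ℕ) (hr : 0 < r) (ht : t ≤ r)
    (G : SimpleGraph V) (hΔ : ∀ v, (G.neighborSet v).ncard ≤ Δ)
    (classes : Fin t → Finset V)
    (hdisj : ∀ i j, i ≠ j → Disjoint (classes i) (classes j))
    (hsize : ∀ i, n ≤ (classes i).card)
    (I : Finset V)
    (hI : (I.card : ℤ) ≤ 2 * ((t : ℤ) - d - 1))
    (hdom : ∀ i, ∀ x ∈ classes i, ∃ y ∈ I, G.Adj x y)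
    (hn : (n : ℝ) > 2 * Δ * (1 - (4 * d + 5) / (4 * r)))
    (Y : Finset V) (hY : Y ⊆ I) :
    ((Y.card : ℝ) - 1) * Δ <
      ((({x | (∃ i, x ∈ classes i) ∧ ∃ v ∈ Y, G.neighborSet x ∩ ↑I = {v}} : Set V).ncard : ℝ)) := by
  classical
  have hdeg : ∀ v, (G.neighborFinset v).card ≤ Δ := by
    intro v
    have h := hΔ v
    rwa [Set.ncard_eq_toFinset_card'] at h
  set V' : Finset V := Finset.univ.biUnion classes with hV'def
  set F : V → Finset V := fun x => G.neighborFinset x ∩ I with hFdef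
  set U : Finset V := V'.filter (fun x => ∃ v ∈ Y, F x = {v}) with hUdef
  set M : Finset V := V'.filter (fun x => ¬(∃ v ∈ Y, F x = {v}) ∧ F x ⊆ Y) with hMdef
  set D : Finset V := V'.filter (fun x => ¬ F x ⊆ Y) with hDdef
  have hFeq : ∀ x v, (G.neighborSet x ∩ ↑I = {v}) ↔ (F x = {v}) := by
    intro x v
    rw [hFdef]
    rw [← Finset.coe_inj, Finset.coe_inter, Finset.coe_singleton,
      SimpleGraph.neighborFinset_def, Set.coe_toFinset]
  -- identify the goal set with ↑U
  have hsetU : ({x | (∃ i, x ∈ classes i) ∧ ∃ v ∈ Y, G.neighborSet x ∩ ↑I = {v}} : Set V)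
      = (↑U : Set V) := by
    ext x
    simp only [Set.mem_setOf_eq, Finset.mem_coe, hUdef, Finset.mem_filter, hV'def,
      Finset.mem_biUnion, Finset.mem_univ, true_and]
    constructor
    · rintro ⟨⟨i, hi⟩, v, hv, hsing⟩
      exact ⟨⟨i, hi⟩, v, hv, (hFeq x v).mp hsing⟩
    · rintro ⟨⟨i, hi⟩, v, hv, hsing⟩
      exact ⟨⟨i, hi⟩, v, hv, (hFeq x v).mpr hsing⟩
  -- every vertex of V' has a neighbor in I
  have hFne : ∀ x ∈ V', (F x).Nonempty := by
    intro x hx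
    rw [hV'def, Finset.mem_biUnion] at hx
    obtain ⟨i, -, hi⟩ := hx
    obtain ⟨y, hyI, hyadj⟩ := hdom i x hi
    refine ⟨y, ?_⟩
    simp [hFdef, SimpleGraph.mem_neighborFinset, hyadj, hyI]
  -- V' is covered by U, M, D
  have hcover : V' ⊆ U ∪ M ∪ D := by
    intro x hx
    simp only [hUdef, hMdef, hDdef, Finset.mem_union, Finset.mem_filter]
    by_cases h1 : F x ⊆ Y
    · by_cases h2 : ∃ v ∈ Y, F x = {v}
      · exact Or.inl (Or.inl ⟨hx, h2⟩)
      · exact Or.inl (Or.inr ⟨hx, h2, h1⟩)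
    · exact Or.inr ⟨hx, h1⟩
  have hUsub : U ⊆ V' := Finset.filter_subset _ _
  have hMsub : M ⊆ V' := Finset.filter_subset _ _
  have hUM : Disjoint U M := by
    rw [Finset.disjoint_left]
    intro x hxU hxM
    rw [hUdef, Finset.mem_filter] at hxU
    rw [hMdef, Finset.mem_filter] at hxM
    exact hxM.2.1 hxU.2
  -- size of V'
  have hVsize : t * n ≤ V'.card := by
    rw [hV'def, Finset.card_biUnion (fun i _ j _ hij => hdisj i j hij)]
    calc t * n = ∑ _i : Fin t, n := by
          rw [Finset.sum_const, Finset.card_univ, Fintype.card_fin, smul_eq_mul]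
      _ ≤ ∑ i : Fin t, (classes i).card := Finset.sum_le_sum (fun i _ => hsize i)
  -- bound on D
  have hDbound : D.card ≤ (I \ Y).card * Δ := by
    have hsub : D ⊆ (I \ Y).biUnion (fun w => G.neighborFinset w) := by
      intro x hx
      rw [hDdef, Finset.mem_filter] at hx
      obtain ⟨hxV, hns⟩ := hx
      obtain ⟨w, hwF, hwY⟩ := Finset.not_subset.mp hns
      rw [hFdef, Finset.mem_inter, SimpleGraph.mem_neighborFinset] at hwF
      refine Finset.mem_biUnion.mpr ⟨w, Finset.mem_sdiff.mpr ⟨hwF.2, hwY⟩, ?_⟩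
      rw [SimpleGraph.mem_neighborFinset]
      exact hwF.1.symm
    calc D.card ≤ ((I \ Y).biUnion (fun w => G.neighborFinset w)).card :=
          Finset.card_le_card hsub
      _ ≤ ∑ w ∈ I \ Y, (G.neighborFinset w).card := Finset.card_biUnion_le
      _ ≤ ∑ _w ∈ I \ Y, Δ := Finset.sum_le_sum (fun w _ => hdeg w)
      _ = (I \ Y).card * Δ := by rw [Finset.sum_const, smul_eq_mul]
  -- edge count upper bound
  have hswap : ∑ x ∈ V', (Y ∩ G.neighborFinset x).card ≤ Y.card * Δ := by
    calc ∑ x ∈ V', (Y ∩ G.neighborFinset x).card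
        = ∑ x ∈ V', ∑ v ∈ Y, if G.Adj v x then 1 else 0 := by
          refine Finset.sum_congr rfl fun x _ => ?_
          have hYN : Y ∩ G.neighborFinset x = Y.filter (fun v => G.Adj v x) := by
            ext v
            simp [SimpleGraph.mem_neighborFinset, G.adj_comm]
          rw [hYN, Finset.card_filter]
      _ = ∑ v ∈ Y, ∑ x ∈ V', if G.Adj v x then 1 else 0 := Finset.sum_comm
      _ = ∑ v ∈ Y, (V'.filter (fun x => G.Adj v x)).card := by
          refine Finset.sum_congr rfl fun v _ => (Finset.card_filter _ _).symm
      _ ≤ ∑ _v ∈ Y, Δ := by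
          refine Finset.sum_le_sum fun v _ => ?_
          refine le_trans (Finset.card_le_card ?_) (hdeg v)
          intro x hx
          rw [Finset.mem_filter] at hx
          rw [SimpleGraph.mem_neighborFinset]
          exact hx.2
      _ = Y.card * Δ := by rw [Finset.sum_const, smul_eq_mul]
  -- edge count lower bound
  have hlow : U.card * 1 + M.card * 2 ≤ ∑ x ∈ V', (Y ∩ G.neighborFinset x).card := by
    have hUone : ∀ x ∈ U, 1 ≤ (Y ∩ G.neighborFinset x).card := by
      intro x hx
      rw [hUdef, Finset.mem_filter] at hx
      obtain ⟨hxV, v, hvY, hsing⟩ := hx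
      have hvF : v ∈ F x := by rw [hsing]; exact Finset.mem_singleton_self v
      rw [hFdef, Finset.mem_inter] at hvF
      have : v ∈ Y ∩ G.neighborFinset x := Finset.mem_inter.mpr ⟨hvY, hvF.1⟩
      exact Finset.card_pos.mpr ⟨v, this⟩
    have hMtwo : ∀ x ∈ M, 2 ≤ (Y ∩ G.neighborFinset x).card := by
      intro x hx
      rw [hMdef, Finset.mem_filter] at hx
      obtain ⟨hxV, hnot, hsub⟩ := hx
      have hF2 : 2 ≤ (F x).card := by
        by_contra hlt
        push_neg at hlt
        interval_cases h : (F x).card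
        · exact absurd h (Finset.nonempty_iff_ne_empty.mp (hFne x hxV) ∘ Finset.card_eq_zero.mp)
        · obtain ⟨v, hv⟩ := Finset.card_eq_one.mp h
          have hvY : v ∈ Y := hsub (by rw [hv]; exact Finset.mem_singleton_self v)
          exact hnot ⟨v, hvY, hv⟩
      refine le_trans hF2 (Finset.card_le_card ?_)
      intro w hw
      have hw' := hw
      rw [hFdef, Finset.mem_inter] at hw'
      exact Finset.mem_inter.mpr ⟨hsub hw, hw'.1⟩
    calc U.card * 1 + M.card * 2
        ≤ (∑ x ∈ U, (Y ∩ G.neighborFinset x).card)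
          + ∑ x ∈ M, (Y ∩ G.neighborFinset x).card := by
          have h1 := Finset.card_nsmul_le_sum U (fun x => (Y ∩ G.neighborFinset x).card) 1 hUone
          have h2 := Finset.card_nsmul_le_sum M (fun x => (Y ∩ G.neighborFinset x).card) 2 hMtwo
          rw [smul_eq_mul] at h1 h2
          omega
      _ = ∑ x ∈ U ∪ M, (Y ∩ G.neighborFinset x).card := (Finset.sum_union hUM).symm
      _ ≤ ∑ x ∈ V', (Y ∩ G.neighborFinset x).card :=
          Finset.sum_le_sum_of_subset (Finset.union_subset hUsub hMsub)
  -- collect ℕ facts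
  have A1 : t * n ≤ U.card + M.card + D.card := by
    refine le_trans hVsize (le_trans (Finset.card_le_card hcover) ?_)
    calc (U ∪ M ∪ D).card ≤ (U ∪ M).card + D.card := Finset.card_union_le _ _
      _ ≤ U.card + M.card + D.card := by
          have := Finset.card_union_le U M
          omega
  have A2 : U.card + 2 * M.card ≤ Y.card * Δ := by
    have := le_trans hlow hswap
    omega
  have A4 : (I \ Y).card + Y.card = I.card := Finset.card_sdiff_add_card_eq_card hY
  have A6 : 1 ≤ t := by omega
  -- move to ℝ
  rw [hsetU, Set.ncard_coe_finset]
  have R1 : (t : ℝ) * n ≤ (U.card : ℝ) + M.card + D.card := by exact_mod_cast A1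
  have R2 : (U.card : ℝ) + 2 * M.card ≤ (Y.card : ℝ) * Δ := by exact_mod_cast A2
  have R3' : (D.card : ℝ) ≤ ((I \ Y).card : ℝ) * Δ := by exact_mod_cast hDbound
  have R4 : ((I \ Y).card : ℝ) + Y.card = I.card := by exact_mod_cast A4
  have R5 : (I.card : ℝ) ≤ 2 * ((t : ℝ) - d - 1) := by exact_mod_cast hI
  have R6 : (1 : ℝ) ≤ t := by exact_mod_cast A6
  have Rr : (0 : ℝ) < r := by exact_mod_cast hr
  have Rt : (t : ℝ) ≤ r := by exact_mod_cast ht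
  have hΔ0 : (0 : ℝ) ≤ Δ := Nat.cast_nonneg Δ
  have h9' : 8 * (r : ℝ) * Δ - (8 * d + 10) * Δ < n * (4 * r) := by
    have e : 2 * (Δ : ℝ) * (1 - (4 * d + 5) / (4 * r))
        = (8 * r * Δ - (8 * d + 10) * Δ) / (4 * r) := by
      field_simp
      ring
    rw [e] at hn
    exact (div_lt_iff₀ (by positivity)).mp hn
  have hkey : ((4 : ℝ) * t - 4 * d - 5) * Δ < 2 * t * n := by
    have ht0 : (0 : ℝ) < t := by linarith
    nlinarith [mul_lt_mul_of_pos_left h9' ht0,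
      mul_nonneg (mul_nonneg (sub_nonneg.mpr Rt) (by positivity : (0:ℝ) ≤ 8 * d + 10)) hΔ0,
      Rr]
  have hfinal : (0 : ℝ) ≤ (4 * (t : ℝ) - 4 * d - 4 - 2 * I.card) * Δ :=
    mul_nonneg (by linarith) hΔ0
  nlinarith [hkey, hfinal, R1, R2, R3', R4, R5]
end

section
/- Let T be a forest (multigraph without cycles) obtained by contracting each part of an induced matching configuration, and let I be a set of vertices of an r-partite graph G such that G[I] is a perfect matching on I and the contracted multigraph 𝒢_I on the set S(I) of parts meeting I is a tree. Then for every part V_i ∈ S(I) there exists an independent set T' ⊆ I with exactly one vertex in each part of S(I) \ {V_i} and no vertex in V_i. -/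
/-- The multigraph obtained from G[I] by contracting each part-intersection, realized
as a simple graph on the parts meeting I. -/
def contractedGraph {V : Type} [DecidableEq V] {r : ℕ} (G : SimpleGraph V)
    (part : V → Fin r) (I : Finset V) :
    SimpleGraph {i : Fin r // i ∈ I.image part} :=
  SimpleGraph.fromRel (fun i j => ∃ v ∈ I, ∃ w ∈ I, G.Adj v w ∧ part v = i.1 ∧ part w = j.1)

/-- If G[I] is a perfect matching and the contracted graph 𝒢_I is a tree on S(I), then
for every part V_i ∈ S(I) there is an independent set T' ⊆ I with exactly one vertex in
each part of S(I) \ {V_i} and none in V_i. -/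
theorem stmt8 {V : Type} [Fintype V] [DecidableEq V] (r : ℕ) (G : SimpleGraph V)
    (part : V → Fin r) (hpartite : ∀ v w, G.Adj v w → part v ≠ part w)
    (I : Finset V)
    (hmatch : ∀ v ∈ I, ∃! w, w ∈ I ∧ G.Adj v w)
    (htree : (contractedGraph G part I).IsTree) :
    ∀ i ∈ I.image part, ∃ T' ⊆ I,
      (∀ x ∈ T', ∀ y ∈ T', ¬ G.Adj x y) ∧
      (∀ j ∈ I.image part, j ≠ i → ∃! x, x ∈ T' ∧ part x = j) ∧
      (∀ x ∈ T', part x ≠ i) := by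
  classical
  intro i hi
  set CG := contractedGraph G part I with hCG
  set ι : {x : Fin r // x ∈ I.image part} := ⟨i, hi⟩ with hι
  have hconn : CG.Connected := htree.isConnected
  -- For every part `j ≠ ι` there is a matching edge from `j` to a part strictly
  -- closer to the root `ι`.
  have key : ∀ j : {x : Fin r // x ∈ I.image part}, j ≠ ι →
      ∃ p : V × V, p.1 ∈ I ∧ p.2 ∈ I ∧ G.Adj p.1 p.2 ∧ part p.1 = j.1 ∧
        ∀ hw : part p.2 ∈ I.image part,
          CG.dist ⟨part p.2, hw⟩ ι < CG.dist j ι := by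
    intro j hj
    obtain ⟨p, hp⟩ := hconn.exists_walk_length_eq_dist j ι
    cases p with
    | nil => exact absurd rfl hj
    | @cons _ k _ h q =>
      rw [SimpleGraph.Walk.length_cons] at hp
      have hdk : CG.dist k ι < CG.dist j ι := by
        have := SimpleGraph.dist_le q
        omega
      rw [hCG, contractedGraph, SimpleGraph.fromRel_adj] at h
      obtain ⟨hne, ⟨v, hv, w, hw, hadj, h1, h2⟩ | ⟨v, hv, w, hw, hadj, h1, h2⟩⟩ := h
      · refine ⟨(v, w), hv, hw, hadj, h1, fun hw' => ?_⟩
        have : (⟨part w, hw'⟩ : {x : Fin r // x ∈ I.image part}) = k := Subtype.ext h2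
        rwa [this]
      · refine ⟨(w, v), hw, hv, hadj.symm, h2, fun hw' => ?_⟩
        have : (⟨part v, hw'⟩ : {x : Fin r // x ∈ I.image part}) = k := Subtype.ext h1
        rwa [this]
  choose f hf1 hf2 hf3 hf4 hf5 using key
  set T' : Finset V :=
    Finset.univ.image
      (fun j : {j : {x : Fin r // x ∈ I.image part} // j ≠ ι} => (f j.1 j.2).1) with hT'
  have hmemT' : ∀ x, x ∈ T' ↔
      ∃ j : {j : {x : Fin r // x ∈ I.image part} // j ≠ ι}, (f j.1 j.2).1 = x := by
    intro x
    simp [hT']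
  have hsub : T' ⊆ I := by
    intro x hx
    obtain ⟨j, rfl⟩ := (hmemT' x).mp hx
    exact hf1 j.1 j.2
  refine ⟨T', hsub, ?_, ?_, ?_⟩
  · -- independence
    intro x hx y hy hxy
    obtain ⟨j, rfl⟩ := (hmemT' x).mp hx
    obtain ⟨k, rfl⟩ := (hmemT' y).mp hy
    -- the matching partner of x is (f j).2, and also y
    obtain ⟨w₀, hw₀, huniq⟩ := hmatch _ (hf1 j.1 j.2)
    have hy_eq : (f k.1 k.2).1 = w₀ := huniq _ ⟨hf1 k.1 k.2, hxy⟩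
    have hw_eq : (f j.1 j.2).2 = w₀ := huniq _ ⟨hf2 j.1 j.2, hf3 j.1 j.2⟩
    have hpy : part (f j.1 j.2).2 = (k.1 : {x : Fin r // x ∈ I.image part}).1 := by
      rw [hw_eq, ← hy_eq, hf4 k.1 k.2]
    have hmem : part (f j.1 j.2).2 ∈ I.image part := by
      rw [hw_eq, ← hy_eq]; exact Finset.mem_image_of_mem part (hf1 k.1 k.2)
    have h1 : CG.dist k.1 ι < CG.dist j.1 ι := by
      have := hf5 j.1 j.2 hmem
      rwa [show (⟨part (f j.1 j.2).2, hmem⟩ : {x : Fin r // x ∈ I.image part}) = k.1 from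
        Subtype.ext hpy] at this
    -- symmetric argument
    obtain ⟨w₁, hw₁, huniq₁⟩ := hmatch _ (hf1 k.1 k.2)
    have hx_eq : (f j.1 j.2).1 = w₁ := huniq₁ _ ⟨hf1 j.1 j.2, hxy.symm⟩
    have hw_eq₁ : (f k.1 k.2).2 = w₁ := huniq₁ _ ⟨hf2 k.1 k.2, hf3 k.1 k.2⟩
    have hpx : part (f k.1 k.2).2 = (j.1 : {x : Fin r // x ∈ I.image part}).1 := by
      rw [hw_eq₁, ← hx_eq, hf4 j.1 j.2]
    have hmem₁ : part (f k.1 k.2).2 ∈ I.image part := by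
      rw [hw_eq₁, ← hx_eq]; exact Finset.mem_image_of_mem part (hf1 j.1 j.2)
    have h2 : CG.dist j.1 ι < CG.dist k.1 ι := by
      have := hf5 k.1 k.2 hmem₁
      rwa [show (⟨part (f k.1 k.2).2, hmem₁⟩ : {x : Fin r // x ∈ I.image part}) = j.1 from
        Subtype.ext hpx] at this
    omega
  · -- exactly one vertex in each part other than i
    intro j hj hji
    have hne : (⟨j, hj⟩ : {x : Fin r // x ∈ I.image part}) ≠ ι := by
      intro h
      exact hji (congrArg Subtype.val h)
    refine ⟨(f ⟨j, hj⟩ hne).1, ⟨(hmemT' _).mpr ⟨⟨⟨j, hj⟩, hne⟩, rfl⟩, hf4 _ hne⟩, ?_⟩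
    rintro y ⟨hyT, hyj⟩
    obtain ⟨k, rfl⟩ := (hmemT' y).mp hyT
    have hk : k.1 = (⟨j, hj⟩ : {x : Fin r // x ∈ I.image part}) :=
      Subtype.ext ((hf4 k.1 k.2).symm.trans hyj)
    have hkk : k = (⟨⟨j, hj⟩, hne⟩ : {j : {x : Fin r // x ∈ I.image part} // j ≠ ι}) :=
      Subtype.ext hk
    exact congrArg (fun t : {j : {x : Fin r // x ∈ I.image part} // j ≠ ι} => (f t.1 t.2).1) hkk
  · -- no vertex in part i
    intro x hx
    obtain ⟨j, rfl⟩ := (hmemT' x).mp hx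
    rw [hf4 j.1 j.2]
    intro h
    exact j.2 (Subtype.ext h)
end

section
/- Let G be an r-partite graph whose maximum independent partial transversal has size at most r − D, and let G' be the disjoint union of G with the complete multipartite graph K_r(⌊Δ/(r−1)⌋), placing one independent class of size ⌊Δ/(r−1)⌋ into each part. If G has maximum degree at most Δ, then G' has maximum degree at most Δ and the maximum independent partial transversal of G' has size at most r − D + 1. (This yields n(r, D−1, Δ) ≥ n(r, D, Δ) + ⌊Δ/(r−1)⌋.) -/
/-- Adding a copy of K_r(⌊Δ/(r−1)⌋) (one class in each part) to an r-partite graph G of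
maximum degree ≤ Δ whose partial independent transversals have size ≤ r − D yields a
graph of maximum degree ≤ Δ whose partial independent transversals have size
≤ r − D + 1. -/
theorem stmt15 {V : Type} [Fintype V] (r D Δ : ℕ) (hr : 2 ≤ r) (hD : 1 ≤ D) (hDr : D ≤ r)
    (G : SimpleGraph V) (part : V → Fin r)
    (hpartite : ∀ v w, G.Adj v w → part v ≠ part w)
    (hdeg : ∀ v, (G.neighborSet v).ncard ≤ Δ)
    (hIT : ∀ S : Finset V, (∀ x ∈ S, ∀ y ∈ S, ¬ G.Adj x y) → Set.InjOn part ↑S →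
      S.card ≤ r - D) :
    let m := Δ / (r - 1)
    let G' : SimpleGraph (V ⊕ (Fin r × Fin m)) := SimpleGraph.fromRel (fun x y =>
      (∃ a b, x = Sum.inl a ∧ y = Sum.inl b ∧ G.Adj a b) ∨
      (∃ p q : Fin r × Fin m, x = Sum.inr p ∧ y = Sum.inr q ∧ p.1 ≠ q.1))
    let part' : V ⊕ (Fin r × Fin m) → Fin r := Sum.elim part Prod.fst
    (∀ v, (G'.neighborSet v).ncard ≤ Δ) ∧
    (∀ v w, G'.Adj v w → part' v ≠ part' w) ∧
    ∀ S : Finset (V ⊕ (Fin r × Fin m)), (∀ x ∈ S, ∀ y ∈ S, ¬ G'.Adj x y) →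
      Set.InjOn part' ↑S → S.card ≤ r - D + 1 := by
  intro m G' part'
  have hadj : ∀ x y, G'.Adj x y ↔ x ≠ y ∧
      ((∃ a b, x = Sum.inl a ∧ y = Sum.inl b ∧ G.Adj a b) ∨
       (∃ a b, y = Sum.inl a ∧ x = Sum.inl b ∧ G.Adj a b) ∨
       (∃ p q : Fin r × Fin m, x = Sum.inr p ∧ y = Sum.inr q ∧ p.1 ≠ q.1) ∨
       (∃ p q : Fin r × Fin m, y = Sum.inr p ∧ x = Sum.inr q ∧ p.1 ≠ q.1)) := by
    intro x y
    rw [SimpleGraph.fromRel_adj]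
    constructor
    · rintro ⟨h1, (h | h) | (h | h)⟩
      exacts [⟨h1, Or.inl h⟩, ⟨h1, Or.inr (Or.inr (Or.inl h))⟩, ⟨h1, Or.inr (Or.inl h)⟩,
        ⟨h1, Or.inr (Or.inr (Or.inr h))⟩]
    · rintro ⟨h1, (h | h | h | h)⟩
      exacts [⟨h1, Or.inl (Or.inl h)⟩, ⟨h1, Or.inr (Or.inl h)⟩, ⟨h1, Or.inl (Or.inr h)⟩,
        ⟨h1, Or.inr (Or.inr h)⟩]
  refine ⟨?_, ?_, ?_⟩
  · -- degree bound
    rintro (a | p)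
    · have hset : G'.neighborSet (Sum.inl a) = Sum.inl '' G.neighborSet a := by
        ext w
        simp only [SimpleGraph.mem_neighborSet, hadj, Set.mem_image]
        constructor
        · rintro ⟨hne, (⟨a', b, ha', hb, hGab⟩ | ⟨a', b, ha', hb, hGab⟩ | ⟨p, q, hp, -, -⟩ |
              ⟨p, q, -, hq, -⟩)⟩
          · exact ⟨b, by cases ha'; exact hGab, hb.symm⟩
          · exact ⟨a', by cases hb; exact hGab.symm, ha'.symm⟩
          · exact absurd hp (by simp)
          · exact absurd hq (by simp)
        · rintro ⟨b, hGab, rfl⟩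
          exact ⟨by simpa using hGab.ne, Or.inl ⟨a, b, rfl, rfl, hGab⟩⟩
      rw [hset, Set.ncard_image_of_injective _ Sum.inl_injective]
      exact hdeg a
    · have hset : G'.neighborSet (Sum.inr p) = Sum.inr '' {q : Fin r × Fin m | q.1 ≠ p.1} := by
        ext w
        simp only [SimpleGraph.mem_neighborSet, hadj, Set.mem_image, Set.mem_setOf_eq]
        constructor
        · rintro ⟨hne, (⟨a', b, ha', -, -⟩ | ⟨a', b, -, hb, -⟩ | ⟨p', q, hp', hq, h1⟩ |
              ⟨p', q, hp', hq, h1⟩)⟩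
          · exact absurd ha' (by simp)
          · exact absurd hb (by simp)
          · cases Sum.inr_injective (hp'.symm : Sum.inr p' = Sum.inr p)
            exact ⟨q, by rw [hq] at *; exact fun h => h1 h.symm, hq.symm⟩
          · cases Sum.inr_injective (hq.symm : Sum.inr q = Sum.inr p)
            exact ⟨p', h1, hp'.symm⟩
        · rintro ⟨q, hq1, rfl⟩
          refine ⟨fun h => hq1 (by cases Sum.inr_injective h; rfl), ?_⟩
          exact Or.inr (Or.inr (Or.inr ⟨q, p, rfl, rfl, hq1⟩))
      rw [hset, Set.ncard_image_of_injective _ Sum.inr_injective]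
      have : {q : Fin r × Fin m | q.1 ≠ p.1}.ncard
          = (Finset.filter (fun q : Fin r × Fin m => q.1 ≠ p.1) Finset.univ).card := by
        rw [Set.ncard_eq_toFinset_card']
        congr 1
        ext q
        simp
      rw [this]
      have heq : Finset.filter (fun q : Fin r × Fin m => q.1 ≠ p.1) Finset.univ
          = ({p.1}ᶜ : Finset (Fin r)) ×ˢ Finset.univ := by
        ext q
        simp [Finset.mem_product]
      rw [heq, Finset.card_product, Finset.card_compl]
      simp only [Finset.card_singleton, Finset.card_univ, Fintype.card_fin]
      calc (r - 1) * m ≤ (r - 1) * (Δ / (r - 1)) := le_rfl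
        _ ≤ Δ := Nat.mul_div_le Δ (r - 1)
  · -- partite
    intro v w hvw
    rw [hadj] at hvw
    obtain ⟨hne, (⟨a, b, rfl, rfl, hGab⟩ | ⟨a, b, rfl, rfl, hGab⟩ | ⟨p, q, rfl, rfl, h1⟩ |
        ⟨p, q, rfl, rfl, h1⟩)⟩ := hvw
    · exact hpartite a b hGab
    · exact (hpartite a b hGab).symm
    · exact h1
    · exact h1.symm
  · -- transversal bound
    intro S hind hinj
    rw [← Finset.card_toLeft_add_card_toRight (u := S)]
    have hleft : S.toLeft.card ≤ r - D := by
      apply hIT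
      · intro x hx y hy hGxy
        apply hind (Sum.inl x) (by simpa using hx) (Sum.inl y) (by simpa using hy)
        rw [hadj]
        exact ⟨by simpa using hGxy.ne, Or.inl ⟨x, y, rfl, rfl, hGxy⟩⟩
      · intro x hx y hy hxy
        have := hinj (Finset.mem_coe.2 (by simpa using hx))
          (Finset.mem_coe.2 (by simpa using hy)) (by simpa [part'] using hxy)
        exact Sum.inl_injective this
    have hright : S.toRight.card ≤ 1 := by
      rw [Finset.card_le_one]
      intro p hp q hq
      by_contra hpq
      rcases eq_or_ne p.1 q.1 with h1 | h1
      · exact hpq (Sum.inr_injective (hinj (Finset.mem_coe.2 (by simpa using hp))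
          (Finset.mem_coe.2 (by simpa using hq)) (by simpa [part'] using h1)))
      · apply hind (Sum.inr p) (by simpa using hp) (Sum.inr q) (by simpa using hq)
        rw [hadj]
        exact ⟨by simp [hpq], Or.inr (Or.inr (Or.inl ⟨p, q, rfl, rfl, h1⟩))⟩
    omega
end

section
/- Let m = jl for positive integers j, l ≥ 2, and let G be an r-partite graph of maximum degree at most Δ with parts of size n whose maximum independent partial transversal has size at most r − D. Form G' as the disjoint union of m copies of G together with a copy of K_m(r·⌊Δ/((m−1)r)⌋), with each of the m independent classes of the complete multipartite graph split evenly into the r parts of one copy (row). Then G' has maximum degree at most Δ, each part of G' has size n + ⌊Δ/((m−1)r)⌋, and the maximum independent partial transversal of G' has size at most mr − (m−1)D. -/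
/-- For m = jl, the union of m copies of an r-partite G (parts of size n, max degree
≤ Δ, partial ITs of size ≤ r − D) with a copy of K_m(r⌊Δ/((m−1)r)⌋), whose classes are
split evenly into the parts of each row, has maximum degree ≤ Δ, parts of size
n + ⌊Δ/((m−1)r)⌋, and partial independent transversals of size ≤ mr − (m−1)D. -/
theorem stmt17 {V : Type} [Fintype V] (r D n Δ j l m : ℕ)
    (hj : 1 ≤ j) (hl : 2 ≤ l) (hm : m = j * l) (hr : 1 ≤ r) (hDr : D ≤ r)
    (G : SimpleGraph V) (part : V → Fin r)
    (hpartite : ∀ v w, G.Adj v w → part v ≠ part w)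
    (hdeg : ∀ v, (G.neighborSet v).ncard ≤ Δ)
    (hsize : ∀ i : Fin r, ({v | part v = i} : Set V).ncard = n)
    (hIT : ∀ S : Finset V, (∀ x ∈ S, ∀ y ∈ S, ¬ G.Adj x y) → Set.InjOn part ↑S →
      S.card ≤ r - D) :
    let m0 := Δ / ((m - 1) * r)
    let G' : SimpleGraph ((Fin m × V) ⊕ (Fin m × Fin r × Fin m0)) :=
      SimpleGraph.fromRel (fun x y =>
        (∃ i a b, x = Sum.inl (i, a) ∧ y = Sum.inl (i, b) ∧ G.Adj a b) ∨
        (∃ p q : Fin m × Fin r × Fin m0, x = Sum.inr p ∧ y = Sum.inr q ∧ p.1 ≠ q.1))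
    let part' : (Fin m × V) ⊕ (Fin m × Fin r × Fin m0) → Fin m × Fin r :=
      Sum.elim (fun z => (z.1, part z.2)) (fun z => (z.1, z.2.1))
    (∀ v, (G'.neighborSet v).ncard ≤ Δ) ∧
    (∀ c : Fin m × Fin r,
      ({v | part' v = c} : Set ((Fin m × V) ⊕ (Fin m × Fin r × Fin m0))).ncard = n + m0) ∧
    ∀ S : Finset ((Fin m × V) ⊕ (Fin m × Fin r × Fin m0)),
      (∀ x ∈ S, ∀ y ∈ S, ¬ G'.Adj x y) → Set.InjOn part' ↑S →
      S.card ≤ m * r - (m - 1) * D := by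
  intro m0 G' part'
  classical
  have hm2 : 2 ≤ m := by
    have := Nat.mul_le_mul hj hl
    omega
  have hadj : ∀ x y, G'.Adj x y ↔ x ≠ y ∧
      ((∃ i a b, x = Sum.inl (i, a) ∧ y = Sum.inl (i, b) ∧ G.Adj a b) ∨
       (∃ p q : Fin m × Fin r × Fin m0, x = Sum.inr p ∧ y = Sum.inr q ∧ p.1 ≠ q.1)) := by
    intro x y
    constructor
    · intro h
      rw [SimpleGraph.fromRel_adj] at h
      refine ⟨h.1, ?_⟩
      rcases h.2 with h' | h'
      · exact h'
      · rcases h' with ⟨i, a, b, hx, hy, hab⟩ | ⟨p, q, hx, hy, hpq⟩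
        · exact Or.inl ⟨i, b, a, hy, hx, hab.symm⟩
        · exact Or.inr ⟨q, p, hy, hx, hpq.symm⟩
    · rintro ⟨hne, h⟩
      rw [SimpleGraph.fromRel_adj]
      exact ⟨hne, Or.inl h⟩
  refine ⟨?_, ?_, ?_⟩
  · -- degree bound
    intro v
    cases v with
    | inl z =>
      obtain ⟨i, a⟩ := z
      have hset : G'.neighborSet (Sum.inl (i, a)) =
          (fun b => (Sum.inl (i, b) : (Fin m × V) ⊕ (Fin m × Fin r × Fin m0))) ''
            G.neighborSet a := by
        ext w
        simp only [SimpleGraph.mem_neighborSet, Set.mem_image]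
        rw [hadj]
        constructor
        · rintro ⟨hne, h | h⟩
          · obtain ⟨i', a', b', hx, hy, hab⟩ := h
            obtain ⟨hi, ha⟩ : i = i' ∧ a = a' := by
              have := Sum.inl.inj hx
              exact ⟨congrArg Prod.fst this, congrArg Prod.snd this⟩
            subst hi; subst ha
            exact ⟨b', hab, hy.symm⟩
          · obtain ⟨p, q, hx, _⟩ := h
            exact absurd hx (by simp)
        · rintro ⟨b, hb, rfl⟩
          refine ⟨?_, Or.inl ⟨i, a, b, rfl, rfl, hb⟩⟩
          intro h
          have := Sum.inl.inj h
          exact hb.ne (congrArg Prod.snd this)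
      rw [hset, Set.ncard_image_of_injective _ (fun b c h => by
        simpa using Sum.inl.inj h)]
      exact hdeg a
    | inr p =>
      have hset : G'.neighborSet (Sum.inr p) =
          Sum.inr '' {q : Fin m × Fin r × Fin m0 | q.1 ≠ p.1} := by
        ext w
        simp only [SimpleGraph.mem_neighborSet, Set.mem_image, Set.mem_setOf_eq]
        rw [hadj]
        constructor
        · rintro ⟨hne, h | h⟩
          · obtain ⟨i', a', b', hx, _⟩ := h
            exact absurd hx (by simp)
          · obtain ⟨p', q', hx, hy, hpq⟩ := h
            have hp : p = p' := Sum.inr.inj hx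
            exact ⟨q', by rw [← hp] at hpq; exact fun h => hpq (h.symm ▸ rfl), hy.symm⟩
        · rintro ⟨q, hq, rfl⟩
          refine ⟨?_, Or.inr ⟨p, q, rfl, rfl, fun h => hq h.symm⟩⟩
          intro h
          exact hq (by rw [Sum.inr.inj h])
      rw [hset, Set.ncard_image_of_injective _ Sum.inr_injective]
      have hcard : ({q : Fin m × Fin r × Fin m0 | q.1 ≠ p.1}).ncard = (m - 1) * (r * m0) := by
        rw [Set.ncard_eq_toFinset_card']
        have : ({q : Fin m × Fin r × Fin m0 | q.1 ≠ p.1}).toFinset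
            = (Finset.univ.erase p.1) ×ˢ (Finset.univ : Finset (Fin r × Fin m0)) := by
          ext q
          simp [Finset.mem_product, Finset.mem_erase]
        rw [this, Finset.card_product, Finset.card_erase_of_mem (Finset.mem_univ _)]
        simp
      rw [hcard]
      calc (m - 1) * (r * m0) = m0 * ((m - 1) * r) := by ring
        _ ≤ Δ := Nat.div_mul_le_self Δ _
  · -- part sizes
    rintro ⟨i, k⟩
    have hset : {v | part' v = (i, k)} =
        (fun a => (Sum.inl (i, a) : (Fin m × V) ⊕ (Fin m × Fin r × Fin m0))) ''
          {a | part a = k} ∪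
        (fun t => (Sum.inr (i, k, t) : (Fin m × V) ⊕ (Fin m × Fin r × Fin m0))) ''
          Set.univ := by
      ext v
      cases v with
      | inl z =>
        obtain ⟨i', a⟩ := z
        simp only [Set.mem_setOf_eq, Set.mem_union, Set.mem_image, Set.mem_univ, part',
          Sum.elim_inl, Prod.mk.injEq]
        constructor
        · rintro ⟨rfl, hk⟩
          exact Or.inl ⟨a, hk, rfl⟩
        · rintro (⟨b, hb, h⟩ | ⟨t, h⟩)
          · have := Sum.inl.inj h
            have h1 : i = i' := congrArg Prod.fst this
            have h2 : b = a := congrArg Prod.snd this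
            exact ⟨h1.symm, h2 ▸ hb⟩
          · exact absurd h (by simp)
      | inr z =>
        obtain ⟨i', k', t⟩ := z
        simp only [Set.mem_setOf_eq, Set.mem_union, Set.mem_image, Set.mem_univ, part',
          Sum.elim_inr, Prod.mk.injEq, true_and]
        constructor
        · rintro ⟨rfl, rfl⟩
          exact Or.inr ⟨t, rfl⟩
        · rintro (⟨b, _, h⟩ | ⟨t', h⟩)
          · exact absurd h (by simp)
          · have := Sum.inr.inj h
            have h1 : i = i' := congrArg Prod.fst this
            have h2 : k = k' := congrArg (fun z => z.2.1) this
            exact ⟨h1.symm, h2.symm⟩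
    rw [hset, Set.ncard_union_eq ?_ (Set.toFinite _) (Set.toFinite _)]
    · rw [Set.ncard_image_of_injective _ (fun b c h => by simpa using Sum.inl.inj h),
        Set.ncard_image_of_injective _ (fun b c h => by simpa using Sum.inr.inj h),
        hsize k]
      congr 1
      simp [Set.ncard_univ]
    · rw [Set.disjoint_left]
      rintro x ⟨a, _, rfl⟩ ⟨t, _, h⟩
      exact absurd h (by simp)
  · -- partial IT bound
    intro S hind hinj
    set f : (Fin m × V) ⊕ (Fin m × Fin r × Fin m0) → Fin m := fun x => (part' x).1 with hf
    have hsum : S.card = ∑ i : Fin m, (S.filter (fun x => f x = i)).card :=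
      Finset.card_eq_sum_card_fiberwise (fun x _ => Finset.mem_univ (f x))
    have hrow : ∀ i, (S.filter (fun x => f x = i)).card ≤ r := by
      intro i
      have h1 : (S.filter (fun x => f x = i)).card ≤ (Finset.univ : Finset (Fin r)).card := by
        apply Finset.card_le_card_of_injOn (fun x => (part' x).2)
        · intro x _; exact Finset.mem_univ _
        · intro x hx y hy hxy
          simp only [Finset.coe_filter, Set.mem_setOf_eq] at hx hy
          exact hinj hx.1 hy.1 (Prod.ext (hx.2.trans hy.2.symm) hxy)
      simpa using h1
    have hrowL : ∀ i, (∀ x ∈ S.filter (fun x => f x = i), ∃ z, x = Sum.inl z) →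
        (S.filter (fun x => f x = i)).card ≤ r - D := by
      intro i hall
      by_cases hne : (S.filter (fun x => f x = i)).Nonempty
      · obtain ⟨x0, hx0⟩ := hne
        obtain ⟨z0, hz0⟩ := hall x0 hx0
        set g : (Fin m × V) ⊕ (Fin m × Fin r × Fin m0) → V :=
          Sum.elim Prod.snd (fun _ => z0.2) with hg
        have hkey : ∀ x ∈ S.filter (fun x => f x = i), x = Sum.inl (i, g x) := by
          intro x hx
          obtain ⟨z, rfl⟩ := hall x hx
          have hfi : z.1 = i := (Finset.mem_filter.mp hx).2
          simp [hg, ← hfi]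
        have hginj : Set.InjOn g (S.filter (fun x => f x = i)) := by
          intro x hx y hy hxy
          rw [hkey x (by exact_mod_cast hx), hkey y (by exact_mod_cast hy), hxy]
        have hcardim : (S.filter (fun x => f x = i)).card
            = ((S.filter (fun x => f x = i)).image g).card :=
          (Finset.card_image_of_injOn hginj).symm
        rw [hcardim]
        apply hIT
        · intro a ha b hb hab
          obtain ⟨x, hx, rfl⟩ := Finset.mem_image.mp ha
          obtain ⟨y, hy, rfl⟩ := Finset.mem_image.mp hb
          apply hind x (Finset.mem_filter.mp hx).1 y (Finset.mem_filter.mp hy).1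
          rw [hkey x hx, hkey y hy, hadj]
          refine ⟨?_, Or.inl ⟨i, g x, g y, rfl, rfl, hab⟩⟩
          intro h
          exact hab.ne (congrArg Prod.snd (Sum.inl.inj h))
        · intro a ha b hb hab
          simp only [Finset.coe_image] at ha hb
          obtain ⟨x, hx, rfl⟩ := ha
          obtain ⟨y, hy, rfl⟩ := hb
          have hx' : x ∈ S.filter (fun x => f x = i) := by exact_mod_cast hx
          have hy' : y ∈ S.filter (fun x => f x = i) := by exact_mod_cast hy
          have hpx : part' x = (i, part (g x)) := by rw [hkey x hx']; rfl
          have hpy : part' y = (i, part (g y)) := by rw [hkey y hy']; rfl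
          have : x = y := hinj (Finset.mem_coe.mpr (Finset.mem_filter.mp hx').1)
            (Finset.mem_coe.mpr (Finset.mem_filter.mp hy').1)
            (by rw [hpx, hpy, hab])
          rw [this]
      · rw [Finset.not_nonempty_iff_eq_empty] at hne
        rw [hne]
        simp
    by_cases hsm : ∃ x ∈ S, ∃ p, x = Sum.inr p
    · obtain ⟨x0, hx0S, p0, rfl⟩ := hsm
      set i0 := p0.1 with hi0
      have honly : ∀ i, i ≠ i0 → ∀ x ∈ S.filter (fun x => f x = i), ∃ z, x = Sum.inl z := by
        intro i hi x hx
        cases x with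
        | inl z => exact ⟨z, rfl⟩
        | inr q =>
          exfalso
          have hq : q.1 = i := (Finset.mem_filter.mp hx).2
          apply hind _ (Finset.mem_filter.mp hx).1 _ hx0S
          rw [hadj]
          refine ⟨?_, Or.inr ⟨q, p0, rfl, rfl, by rw [hq]; exact hi⟩⟩
          intro h
          apply hi
          rw [← hq, Sum.inr.inj h]
      have hsplit : ∑ i : Fin m, (S.filter (fun x => f x = i)).card
          = (S.filter (fun x => f x = i0)).card
            + ∑ i ∈ Finset.univ.erase i0, (S.filter (fun x => f x = i)).card :=
        (Finset.add_sum_erase _ _ (Finset.mem_univ i0)).symm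
      have h1 : ∑ i ∈ Finset.univ.erase i0, (S.filter (fun x => f x = i)).card
          ≤ (m - 1) * (r - D) := by
        have := Finset.sum_le_card_nsmul (Finset.univ.erase i0)
          (fun i => (S.filter (fun x => f x = i)).card) (r - D)
          (fun i hi => hrowL i (honly i (Finset.ne_of_mem_erase hi)))
        have hce : (Finset.univ.erase i0).card = m - 1 := by
          rw [Finset.card_erase_of_mem (Finset.mem_univ _)]
          simp
        rw [hce] at this
        simpa using this
      have e1 : (m - 1) * (r - D) + (m - 1) * D = (m - 1) * r := by
        rw [← Nat.mul_add, Nat.sub_add_cancel hDr]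
      have e2 : (m - 1) * r + r = m * r := by
        have hm1 : (m - 1) + 1 = m := by omega
        calc (m - 1) * r + r = ((m - 1) + 1) * r := by ring
          _ = m * r := by rw [hm1]
      have h2 := hrow i0
      omega
    · push_neg at hsm
      have hall : ∀ i, (S.filter (fun x => f x = i)).card ≤ r - D := by
        intro i
        apply hrowL
        intro x hx
        cases x with
        | inl z => exact ⟨z, rfl⟩
        | inr q => exact absurd rfl (hsm _ (Finset.mem_filter.mp hx).1 q)
      have h1 : S.card ≤ m * (r - D) := by
        rw [hsum]
        have := Finset.sum_le_card_nsmul (Finset.univ : Finset (Fin m))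
          (fun i => (S.filter (fun x => f x = i)).card) (r - D) (fun i _ => hall i)
        simpa using this
      have e1 : m * (r - D) + m * D = m * r := by
        rw [← Nat.mul_add, Nat.sub_add_cancel hDr]
      have e2 : (m - 1) * D + D = m * D := by
        have hm1 : (m - 1) + 1 = m := by omega
        calc (m - 1) * D + D = ((m - 1) + 1) * D := by ring
          _ = m * D := by rw [hm1]
      omega
end

section
/- Let G be an r-partite graph with parts of size n > 2Δ(1 − 1/(q−1)) and maximum degree at most Δ, where q ≥ 2. Suppose I is an IMC whose contracted forest F_I has a component J on b parts such that I ∩ V_J has exactly 2(b−1) vertices and every vertex of G lying in the b parts of J has a neighbor in I ∩ V_J. Then b ≥ q. -/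
/-- If the parts have size ≥ n > 2Δ(1 − 1/(q−1)), I induces a perfect matching, and a
component J of the contracted forest consists of b parts such that I ∩ V_J has exactly
2(b−1) vertices and dominates all vertices lying in the parts of J, then b ≥ q. -/
theorem stmt19 {V : Type} [Fintype V] [DecidableEq V] (r q b n Δ : ℕ)
    (hq : 2 ≤ q) (hb : 1 ≤ b)
    (G : SimpleGraph V) (part : V → Fin r)
    (hpartite : ∀ v w, G.Adj v w → part v ≠ part w)
    (hdeg : ∀ v, (G.neighborSet v).ncard ≤ Δ)
    (hsize : ∀ i : Fin r, n ≤ ({v | part v = i} : Set V).ncard)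
    (hn : (n : ℝ) > 2 * Δ * (1 - 1 / ((q : ℝ) - 1)))
    (I : Finset V)
    (hmatch : ∀ v ∈ I, ∃! w, w ∈ I ∧ G.Adj v w)
    (J : Finset (Fin r)) (hJ : J.card = b)
    (hIJ : (I.filter (fun v => part v ∈ J)).card = 2 * (b - 1))
    (hdom : ∀ v : V, part v ∈ J → ∃ w ∈ I.filter (fun v => part v ∈ J), G.Adj v w) :
    q ≤ b := by
  classical
  set M : Finset V := I.filter (fun v => part v ∈ J) with hMdef
  set S : Finset V := Finset.univ.filter (fun v => part v ∈ J) with hSdef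
  -- lower bound on |S|
  have hlb : b * n ≤ S.card := by
    have hSeq : S = J.biUnion (fun i => Finset.univ.filter (fun v => part v = i)) := by
      ext v
      simp [hSdef, Finset.mem_biUnion, eq_comm]
    have hdisj : ∀ i ∈ J, ∀ j ∈ J, i ≠ j →
        Disjoint (Finset.univ.filter (fun v => part v = i))
          (Finset.univ.filter (fun v => part v = j)) := by
      intro i _ j _ hij
      simp only [Finset.disjoint_left, Finset.mem_filter]
      rintro v ⟨_, rfl⟩ ⟨_, h⟩
      exact hij h
    rw [hSeq, Finset.card_biUnion hdisj]
    calc b * n = ∑ _i ∈ J, n := by rw [Finset.sum_const, hJ, smul_eq_mul, mul_comm]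
      _ ≤ _ := by
          apply Finset.sum_le_sum
          intro i _
          have := hsize i
          have hcard : ({v | part v = i} : Set V).ncard
              = (Finset.univ.filter (fun v => part v = i)).card := by
            rw [← Set.ncard_coe_finset]
            congr 1
            ext v; simp
          omega
  -- upper bound on |S|
  have hub : S.card ≤ 2 * (b - 1) * Δ := by
    have hsub : S ⊆ M.biUnion (fun w => G.neighborFinset w) := by
      intro v hv
      simp only [hSdef, Finset.mem_filter, Finset.mem_univ, true_and] at hv
      obtain ⟨w, hw, hadj⟩ := hdom v hv
      exact Finset.mem_biUnion.2 ⟨w, hw, by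
        simpa [SimpleGraph.mem_neighborFinset] using hadj.symm⟩
    calc S.card ≤ (M.biUnion (fun w => G.neighborFinset w)).card :=
          Finset.card_le_card hsub
      _ ≤ ∑ w ∈ M, (G.neighborFinset w).card := Finset.card_biUnion_le
      _ ≤ ∑ _w ∈ M, Δ := by
          apply Finset.sum_le_sum
          intro w _
          have := hdeg w
          have : (G.neighborSet w).ncard = (G.neighborFinset w).card := by
            rw [← Set.ncard_coe_finset]
            congr 1
            simp [SimpleGraph.neighborFinset]
          omega
      _ = 2 * (b - 1) * Δ := by rw [Finset.sum_const, hIJ, smul_eq_mul]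
  have key : b * n ≤ 2 * (b - 1) * Δ := le_trans hlb hub
  -- real arithmetic
  by_contra hcon
  push_neg at hcon
  have hbq : (b : ℝ) ≤ (q : ℝ) - 1 := by
    have : b + 1 ≤ q := hcon
    have := Nat.cast_le (α := ℝ) |>.2 this
    push_cast at this
    linarith
  have hq1 : (0 : ℝ) < (q : ℝ) - 1 := by
    have : (2 : ℝ) ≤ q := by exact_mod_cast hq
    linarith
  have hbpos : (0 : ℝ) < b := by exact_mod_cast hb
  have keyR : (b : ℝ) * n ≤ 2 * ((b : ℝ) - 1) * Δ := by
    have := Nat.cast_le (α := ℝ) |>.2 key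
    push_cast [Nat.cast_sub hb] at this
    linarith
  have hDnn : (0 : ℝ) ≤ Δ := Nat.cast_nonneg Δ
  have htpos : (0 : ℝ) < 1 / ((q : ℝ) - 1) := by positivity
  have ht1 : ((q : ℝ) - 1) * (1 / ((q : ℝ) - 1)) = 1 := by
    field_simp
  -- b * (1/(q-1)) ≤ 1
  have hbt : (b : ℝ) * (1 / ((q : ℝ) - 1)) ≤ 1 := by
    calc (b : ℝ) * (1 / ((q : ℝ) - 1)) ≤ ((q : ℝ) - 1) * (1 / ((q : ℝ) - 1)) :=
          mul_le_mul_of_nonneg_right hbq htpos.le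
      _ = 1 := ht1
  -- multiply hn by b
  have hmul : (b : ℝ) * ((n : ℝ)) > (b : ℝ) * (2 * Δ * (1 - 1 / ((q : ℝ) - 1))) :=
    mul_lt_mul_of_pos_left hn hbpos
  nlinarith [mul_nonneg hDnn (sub_nonneg.2 hbt)]
end
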